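/- Let f ∈ ℤ[x] be irreducible over ℚ of even degree 2g+2 ≥ 4 with leading coefficient not divisible by a prime p, where p is an odd prime such that f mod p has no root in 𝔽_p. Let d be a squarefree positive integer with p | d. Then the smooth projective hyperelliptic curve C_d: dy² = f(x) has no ℚ_p-rational points. (Points at infinity: since deg f = 2g+2, the points at infinity of C_d are defined over ℚ_p iff the leading coefficient of f divided by d is a square in ℚ_p; since v_p(d) = 1 and v_p of the leading coefficient is 0, this quotient has odd valuation and is not a square, so the points at infinity are not ℚ_p-rational.) -/

import Mathlib

open Polynomial

section aux

variable {p : ℕ} [hp : Fact p.Prime]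

private lemma padic_norm_sum_lt {B : ℝ} (hB : 0 < B) (s : Finset ℕ) (g : ℕ → ℚ_[p])
    (h : ∀ i ∈ s, ‖g i‖ < B) : ‖∑ i ∈ s, g i‖ < B := by
  classical
  induction s using Finset.induction_on with
  | empty => simpa using hB
  | insert a s hx ih =>
    rw [Finset.sum_insert hx]
    refine lt_of_le_of_lt (Padic.nonarchimedean _ _) (max_lt ?_ ?_)
    · exact h a (Finset.mem_insert_self a s)
    · exact ih fun i hi => h i (Finset.mem_insert_of_mem hi)

private lemma padic_val_eq_of_norm_eq {x y : ℚ_[p]} (hx : x ≠ 0) (hy : y ≠ 0)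
    (h : ‖x‖ = ‖y‖) : x.valuation = y.valuation := by
  rw [Padic.norm_eq_zpow_neg_valuation hx, Padic.norm_eq_zpow_neg_valuation hy] at h
  have hp1 : (1 : ℝ) < p := by exact_mod_cast hp.out.one_lt
  have := zpow_right_injective₀ (by positivity) (ne_of_gt hp1) h
  omega

private lemma padic_val_pow {x : ℚ_[p]} (hx : x ≠ 0) (n : ℕ) :
    (x ^ n).valuation = n * x.valuation := by
  induction n with
  | zero => simp [Padic.valuation_one]
  | succ n ih =>
    rw [pow_succ, Padic.valuation_mul (pow_ne_zero n hx) hx, ih]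
    push_cast
    ring

private lemma padic_norm_int_one {k : ℤ} (hk : ¬ (p : ℤ) ∣ k) : ‖(k : ℚ_[p])‖ = 1 := by
  refine le_antisymm (Padic.norm_int_le_one k) ?_
  by_contra hlt
  push_neg at hlt
  exact hk (Padic.norm_intCast_lt_one_iff.mp hlt)

/-- For `‖x‖ ≤ 1`, `aeval x f` has norm 1 when `f` has no root mod `p`. -/
private lemma norm_aeval_of_le_one (f : Polynomial ℤ)
    (hroot : ∀ a : ℤ, ¬ (p : ℤ) ∣ f.eval a) {x : ℚ_[p]} (hx : ‖x‖ ≤ 1) :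
    ‖Polynomial.aeval x f‖ = 1 := by
  set z : ℤ_[p] := ⟨x, hx⟩ with hz
  have hcoe : (Polynomial.aeval x f) = ((Polynomial.aeval z f : ℤ_[p]) : ℚ_[p]) := by
    exact Polynomial.aeval_algHom_apply
      ((PadicInt.Coe.ringHom : ℤ_[p] →+* ℚ_[p]).toIntAlgHom) z f
  rw [hcoe, ← PadicInt.norm_def]
  refine le_antisymm (PadicInt.norm_le_one _) ?_
  by_contra hlt
  push_neg at hlt
  have hdvd : (p : ℤ_[p]) ∣ Polynomial.aeval z f :=
    (PadicInt.norm_lt_one_iff_dvd _).mp hlt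
  -- pass to the residue field
  have hker : PadicInt.toZMod (Polynomial.aeval z f) = 0 := by
    have : Polynomial.aeval z f ∈ IsLocalRing.maximalIdeal ℤ_[p] := by
      rw [PadicInt.maximalIdeal_eq_span_p, Ideal.mem_span_singleton]; exact hdvd
    rwa [← PadicInt.ker_toZMod, RingHom.mem_ker] at this
  have hcomm : PadicInt.toZMod (Polynomial.aeval z f)
      = Polynomial.aeval (PadicInt.toZMod z) f := by
    exact (Polynomial.aeval_algHom_apply
      ((PadicInt.toZMod : ℤ_[p] →+* ZMod p).toIntAlgHom) z f).symm
  obtain ⟨a, ha⟩ := ZMod.intCast_surjective (PadicInt.toZMod z)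
  have : ((f.eval a : ℤ) : ZMod p) = 0 := by
    have := hcomm ▸ hker
    rw [← ha] at this
    rwa [Polynomial.aeval_def, ← Polynomial.eval_map, Polynomial.eval_intCast_map] at this
  exact hroot a ((ZMod.intCast_zmod_eq_zero_iff_dvd _ _).mp this)

/-- For `‖x‖ > 1`, the leading term dominates. -/
private lemma norm_aeval_of_one_lt (f : Polynomial ℤ) (hf0 : f.natDegree ≠ 0)
    (hlead : ¬ (p : ℤ) ∣ f.leadingCoeff) {x : ℚ_[p]} (hx : 1 < ‖x‖) :
    ‖Polynomial.aeval x f‖ = ‖x‖ ^ f.natDegree := by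
  classical
  set n := f.natDegree with hn
  have hxpos : (0 : ℝ) < ‖x‖ := lt_trans one_pos hx
  have hsum : Polynomial.aeval x f
      = (∑ i ∈ Finset.range n, (f.coeff i : ℚ_[p]) * x ^ i)
        + (f.leadingCoeff : ℚ_[p]) * x ^ n := by
    rw [Polynomial.aeval_eq_sum_range, Finset.sum_range_succ, Polynomial.leadingCoeff]
    simp [zsmul_eq_mul, hn]
  have hlcnorm : ‖(f.leadingCoeff : ℚ_[p])‖ = 1 := padic_norm_int_one hlead
  have hlast : ‖(f.leadingCoeff : ℚ_[p]) * x ^ n‖ = ‖x‖ ^ n := by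
    rw [norm_mul, hlcnorm, one_mul, norm_pow]
  have hrest : ‖∑ i ∈ Finset.range n, (f.coeff i : ℚ_[p]) * x ^ i‖ < ‖x‖ ^ n := by
    refine padic_norm_sum_lt (by positivity) _ _ fun i hi => ?_
    rw [Finset.mem_range] at hi
    calc ‖(f.coeff i : ℚ_[p]) * x ^ i‖ ≤ 1 * ‖x‖ ^ i := by
          rw [norm_mul, norm_pow]
          exact mul_le_mul_of_nonneg_right (Padic.norm_int_le_one _) (by positivity)
      _ = ‖x‖ ^ i := one_mul _
      _ < ‖x‖ ^ n := pow_lt_pow_right₀ hx hi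
  rw [hsum, add_comm, Padic.add_eq_max_of_ne (by rw [hlast]; exact ne_of_gt hrest),
    hlast]
  exact max_eq_left (le_of_lt hrest)

end aux

/-- for f ∈ ℤ[x] irreducible over ℚ of even degree 2g+2 ≥ 4, p an odd
prime not dividing the leading coefficient such that f mod p has no root, and d a
squarefree positive integer with p | d, the smooth projective hyperelliptic curve
C_d : d·y² = f(x) has no ℚ_p-rational points: there are no affine ℚ_p-points, and the
points at infinity are not ℚ_p-rational because leadingCoeff(f)/d is not a square. -/
theorem stmt_13 (p : ℕ) [hp : Fact p.Prime] (hodd : p ≠ 2) (g : ℕ) (hg : 1 ≤ g)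
    (f : Polynomial ℤ) (hirr : Irreducible (f.map (Int.castRingHom ℚ)))
    (hdeg : f.natDegree = 2 * g + 2)
    (hlead : ¬ (p : ℤ) ∣ f.leadingCoeff)
    (hroot : ∀ a : ℤ, ¬ (p : ℤ) ∣ f.eval a)
    (d : ℤ) (hdpos : 0 < d) (hsq : Squarefree d) (hpd : (p : ℤ) ∣ d) :
    (¬ ∃ x y : ℚ_[p], (d : ℚ_[p]) * y ^ 2 = Polynomial.aeval x f) ∧
    (¬ ∃ z : ℚ_[p], z ^ 2 = (f.leadingCoeff : ℚ_[p]) / (d : ℚ_[p])) := by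
  have hdne : d ≠ 0 := ne_of_gt hdpos
  have hdne' : (d : ℚ_[p]) ≠ 0 := Int.cast_ne_zero.mpr hdne
  -- valuation of d is 1
  have hvd : (d : ℚ_[p]).valuation = 1 := by
    rw [Padic.valuation_intCast]
    have h1 : 1 ≤ padicValInt p d := by
      have := (padicValInt_dvd_iff 1 d).mp (by simpa using hpd)
      omega
    have h2 : ¬ 2 ≤ padicValInt p d := by
      intro h2
      have : (p : ℤ) ^ 2 ∣ d := (padicValInt_dvd_iff 2 d).mpr (Or.inr h2)
      have hu : IsUnit (p : ℤ) := hsq (p : ℤ) (by rwa [← sq])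
      rw [Int.isUnit_iff] at hu
      have := hp.out.one_lt
      omega
    omega
  -- p does not divide the leading coefficient, so its valuation is 0
  have hlcne : f.leadingCoeff ≠ 0 := by
    intro h
    exact hroot 0 (by simp [Polynomial.leadingCoeff_eq_zero.mp h])
  have hfne : f ≠ 0 := fun h => hlcne (by simp [h])
  constructor
  · rintro ⟨x, y, hxy⟩
    -- the valuation of `aeval x f` is even and it is nonzero
    have hval : Polynomial.aeval x f ≠ 0 ∧ Even ((Polynomial.aeval x f).valuation) := by
      by_cases hx : ‖x‖ ≤ 1
      · have h1 := norm_aeval_of_le_one f hroot hx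
        have hne : Polynomial.aeval x f ≠ 0 := by
          intro h; rw [h] at h1; simpa using h1
        refine ⟨hne, ?_⟩
        have := Padic.norm_eq_zpow_neg_valuation hne
        rw [h1] at this
        have hp1 : (1 : ℝ) < p := by exact_mod_cast hp.out.one_lt
        have hv0 : (Polynomial.aeval x f).valuation = 0 := by
          have := zpow_right_injective₀ (by positivity) (ne_of_gt hp1)
            (this.symm.trans (zpow_zero (p : ℝ)).symm)
          omega
        simp [hv0]
      · push_neg at hx
        have hxne : x ≠ 0 := by
          intro h; rw [h] at hx; simp at hx; linarith
        have h1 := norm_aeval_of_one_lt f (by omega) hlead hx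
        have hne : Polynomial.aeval x f ≠ 0 := by
          intro h; rw [h, norm_zero] at h1
          have : (0 : ℝ) < ‖x‖ ^ f.natDegree := by positivity
          linarith [this.ne' h1.symm]
        refine ⟨hne, ?_⟩
        have hveq : (Polynomial.aeval x f).valuation = (x ^ f.natDegree).valuation := by
          refine padic_val_eq_of_norm_eq hne (pow_ne_zero _ hxne) ?_
          rw [h1, norm_pow]
        rw [hveq, padic_val_pow hxne, hdeg]
        exact ⟨(g + 1) * x.valuation, by push_cast; ring⟩
    obtain ⟨hne, heven⟩ := hval
    have hyne : y ≠ 0 := by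
      intro h
      rw [h] at hxy
      simp at hxy
      exact hne hxy.symm
    have hlhs : ((d : ℚ_[p]) * y ^ 2).valuation = 1 + 2 * y.valuation := by
      rw [Padic.valuation_mul hdne' (pow_ne_zero 2 hyne), hvd, padic_val_pow hyne]
      push_cast; ring
    rw [hxy] at hlhs
    obtain ⟨k, hk⟩ := heven
    omega
  · rintro ⟨z, hz⟩
    have hlcne' : (f.leadingCoeff : ℚ_[p]) ≠ 0 := Int.cast_ne_zero.mpr hlcne
    have hzne : z ≠ 0 := by
      intro h
      rw [h, zero_pow (by norm_num)] at hz
      rcases div_eq_zero_iff.mp hz.symm with h' | h'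
      · exact hlcne' h'
      · exact hdne' h'
    have hzd : z ^ 2 * (d : ℚ_[p]) = (f.leadingCoeff : ℚ_[p]) := by
      rw [hz, div_mul_cancel₀ _ hdne']
    have hvlc : ((f.leadingCoeff : ℚ_[p])).valuation = 0 := by
      rw [Padic.valuation_intCast, padicValInt.eq_zero_of_not_dvd hlead]
      simp
    have := Padic.valuation_mul (pow_ne_zero 2 hzne) hdne'
    rw [hzd, hvlc, hvd, padic_val_pow hzne] at this
    omega
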